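/- Let v and w be weight structures on the same triangulated category C with C_{w≤0} ⊆ C_{v≤0} and C_{w≥0} ⊆ C_{v≥0}. Then w = v, i.e., both inclusions are equalities. -/

import Mathlib

open CategoryTheory CategoryTheory.Limits CategoryTheory.Pretriangulated ZeroObject

universe w' v u

variable (C : Type u) [Category.{v} C] [HasZeroObject C] [HasShift C ℤ]
  [Preadditive C] [∀ n : ℤ, (shiftFunctor C n).Additive] [Pretriangulated C]

/-- A t-structure `t = (C_{t≤0}, C_{t≥0})` on a triangulated category, in the homological
convention of the paper.  `le` is the class `C_{t≤0}` and `ge` is the class `C_{t≥0}`.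
The condition `C_{t≤0} ⊆ C_{t≤0}[1]` is encoded as `le X → le (X⟦-1⟧)` (the classes being
closed under isomorphism), and `C_{t≥0}[1] ⊆ C_{t≥0}` as `ge X → ge (X⟦1⟧)`.
The class `C_{t≤i} = C_{t≤0}[i]` is `fun X => le (X⟦-i⟧)` and similarly for `C_{t≥i}`. -/
structure PaperTStructure where
  /-- the class `C_{t≤0}` -/
  le : C → Prop
  /-- the class `C_{t≥0}` -/
  ge : C → Prop
  le_iso : ∀ {X Y : C}, (X ≅ Y) → le X → le Y
  ge_iso : ∀ {X Y : C}, (X ≅ Y) → ge X → ge Y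
  le_shift : ∀ X : C, le X → le (X⟦(-1 : ℤ)⟧)
  ge_shift : ∀ X : C, ge X → ge (X⟦(1 : ℤ)⟧)
  /-- `C_{t≥0}[1] ⊥ C_{t≤0}` -/
  orth : ∀ (X Y : C), ge X → le Y → ∀ f : X⟦(1 : ℤ)⟧ ⟶ Y, f = 0
  /-- every object `M` admits a `t`-decomposition `L → M → R → L[1]` with `L ∈ C_{t≥0}`,
  `R ∈ C_{t≤0}[-1]` (i.e. `R⟦1⟧ ∈ C_{t≤0}`) -/
  decomp : ∀ M : C, ∃ (L R : C) (f : L ⟶ M) (g : M ⟶ R) (h : R ⟶ L⟦(1 : ℤ)⟧),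
    (Triangle.mk f g h ∈ distTriang C) ∧ ge L ∧ le (R⟦(1 : ℤ)⟧)

/-- A weight structure `w = (C_{w≤0}, C_{w≥0})` on a triangulated category, in the homological
convention of the paper.  `le` is the class `C_{w≤0}` and `ge` is the class `C_{w≥0}`;
both are retraction-closed.  `C_{w≤i} = C_{w≤0}[i]` is `fun X => le (X⟦-i⟧)`, similarly `ge`. -/
structure PaperWeightStructure where
  /-- the class `C_{w≤0}` -/
  le : C → Prop
  /-- the class `C_{w≥0}` -/
  ge : C → Prop
  le_retract : ∀ (X Y : C), le Y → (∃ (i : X ⟶ Y) (r : Y ⟶ X), i ≫ r = 𝟙 X) → le X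
  ge_retract : ∀ (X Y : C), ge Y → (∃ (i : X ⟶ Y) (r : Y ⟶ X), i ≫ r = 𝟙 X) → ge X
  le_shift : ∀ X : C, le X → le (X⟦(-1 : ℤ)⟧)
  ge_shift : ∀ X : C, ge X → ge (X⟦(1 : ℤ)⟧)
  /-- `C_{w≤0} ⊥ C_{w≥0}[1]` -/
  orth : ∀ (X Y : C), le X → ge Y → ∀ f : X ⟶ Y⟦(1 : ℤ)⟧, f = 0
  /-- every object `M` admits a weight decomposition `L → M → R → L[1]` with `L ∈ C_{w≤0}`,
  `R ∈ C_{w≥0}[1]` (i.e. `R⟦-1⟧ ∈ C_{w≥0}`) -/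
  decomp : ∀ M : C, ∃ (L R : C) (f : L ⟶ M) (g : M ⟶ R) (h : R ⟶ L⟦(1 : ℤ)⟧),
    (Triangle.mk f g h ∈ distTriang C) ∧ le L ∧ ge (R⟦(-1 : ℤ)⟧)

/-- A class of objects is extension-closed if it contains `0` and for every distinguished
triangle `X → Y → Z → X[1]` with `X, Z` in the class, `Y` lies in the class. -/
def ExtClosed (P : C → Prop) : Prop :=
  P (0 : C) ∧ ∀ T : Triangle C, (T ∈ distTriang C) → P T.obj₁ → P T.obj₃ → P T.obj₂

/-- A class of objects is retraction-closed if it contains all retracts of its elements. -/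
def RetractClosed (P : C → Prop) : Prop :=
  ∀ X Y : C, P Y → (∃ (i : X ⟶ Y) (r : Y ⟶ X), i ≫ r = 𝟙 X) → P X

/-- if `v` and `w` are weight structures on the same triangulated category with
`C_{w≤0} ⊆ C_{v≤0}` and `C_{w≥0} ⊆ C_{v≥0}`, then `w = v`. -/
theorem stmt6 (v w : PaperWeightStructure C)
    (h1 : ∀ X : C, w.le X → v.le X) (h2 : ∀ X : C, w.ge X → v.ge X) :
    w = v := by
  -- reverse inclusions
  have hle : ∀ X : C, v.le X → w.le X := by
    intro X hX
    obtain ⟨L, R, f, g, h, hT, hL, hR⟩ := w.decomp X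
    have e : (R⟦(-1 : ℤ)⟧)⟦(1 : ℤ)⟧ ≅ R :=
      (shiftFunctorCompIsoId C (-1 : ℤ) (1 : ℤ) (by ring)).app R
    have hg : g = 0 := by
      have : g ≫ e.inv = 0 := v.orth X (R⟦(-1 : ℤ)⟧) hX (h2 _ hR) (g ≫ e.inv)
      calc g = (g ≫ e.inv) ≫ e.hom := by simp
        _ = 0 := by rw [this]; simp
    obtain ⟨s, hs⟩ := Triangle.coyoneda_exact₂ _ hT (𝟙 X) (by simp [hg]; exact Category.id_comp _)
    exact w.le_retract X L hL ⟨s, f, hs.symm⟩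
  have hge : ∀ X : C, v.ge X → w.ge X := by
    intro X hX
    obtain ⟨L, R, f, g, h, hT, hL, hR⟩ := w.decomp (X⟦(1 : ℤ)⟧)
    have hf : f = 0 := v.orth L X (h1 _ hL) hX f
    obtain ⟨r, hr⟩ := Triangle.yoneda_exact₂ _ hT (𝟙 (X⟦(1 : ℤ)⟧)) (by simp [hf]; exact Category.comp_id _)
    have e : (X⟦(1 : ℤ)⟧)⟦(-1 : ℤ)⟧ ≅ X :=
      (shiftFunctorCompIsoId C (1 : ℤ) (-1 : ℤ) (by ring)).app X
    refine w.ge_retract X (R⟦(-1 : ℤ)⟧) hR ⟨e.inv ≫ g⟦(-1 : ℤ)⟧', r⟦(-1 : ℤ)⟧' ≫ e.hom, ?_⟩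
    have : g ≫ r = 𝟙 (X⟦(1 : ℤ)⟧) := hr.symm
    calc (e.inv ≫ g⟦(-1 : ℤ)⟧') ≫ r⟦(-1 : ℤ)⟧' ≫ e.hom
        = e.inv ≫ (g ≫ r)⟦(-1 : ℤ)⟧' ≫ e.hom := by
          rw [Category.assoc]; exact congrArg (e.inv ≫ ·) ((shiftFunctor C (-1 : ℤ)).map_comp_assoc g r e.hom).symm
      _ = 𝟙 X := by rw [this]; simp
  obtain ⟨wle, wge, a1, a2, a3, a4, a5, a6⟩ := w
  obtain ⟨vle, vge, b1, b2, b3, b4, b5, b6⟩ := v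
  have e1 : wle = vle := funext fun X => propext ⟨h1 X, hle X⟩
  have e2 : wge = vge := funext fun X => propext ⟨h2 X, hge X⟩
  subst e1; subst e2
  rfl
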